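/- For s ∈ {0,1}, let μ_sx, μ_sy ∈ ℝ, σ_sx, σ_sy > 0, r_s ∈ (−1,1), and let N_s denote the bivariate Gaussian measure on ℝ² with mean (μ_sx, μ_sy) and covariance matrix [[σ_sx², r_s σ_sx σ_sy],[r_s σ_sx σ_sy, σ_sy²]]. Define T_x(x) = μ_1x + (σ_1x/σ_0x)(x − μ_0x) and T_{y|x}(x, y) = μ_1y + (r_1 σ_1y/σ_1x)(T_x(x) − μ_1x) + (σ_1y √(1 − r_1²))/(σ_0y √(1 − r_0²)) · ( y − μ_0y − (r_0 σ_0y/σ_0x)(x − μ_0x) ). Then the pushforward of N_0 under the lower triangular map (x, y) ↦ (T_x(x), T_{y|x}(x, y)) equals N_1. -/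

import Mathlib

open Matrix MeasureTheory
open scoped ENNReal

/-- The multivariate Gaussian measure `N(m, S)` on `ℝ^d`, defined via its density
`(2π)^{-d/2} det(S)^{-1/2} exp(-(1/2)(x-m)ᵀ S⁻¹ (x-m))` with respect to Lebesgue measure. -/
noncomputable def mvGaussian {d : ℕ} (m : Fin d → ℝ) (S : Matrix (Fin d) (Fin d) ℝ) :
    Measure (Fin d → ℝ) :=
  volume.withDensity fun x =>
    ENNReal.ofReal (Real.sqrt ((2 * Real.pi) ^ d * S.det)⁻¹ *
      Real.exp (-(1 / 2) * ((x - m) ⬝ᵥ S⁻¹.mulVec (x - m))))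

lemma map_withDensity_equiv {α β : Type*} [MeasurableSpace α] [MeasurableSpace β]
    (e : α ≃ᵐ β) (μ : Measure α) (g : β → ℝ≥0∞) :
    Measure.map e (μ.withDensity fun a => g (e a)) = (Measure.map e μ).withDensity g := by
  ext s hs
  rw [Measure.map_apply e.measurable hs, withDensity_apply _ (e.measurable hs),
    withDensity_apply _ hs, Measure.restrict_map e.measurable hs]
  exact (e.measurableEmbedding.lintegral_map _).symm

lemma qform_eval (σx σy r : ℝ) (hσx : σx ≠ 0) (hσy : σy ≠ 0) (h : 1 - r ^ 2 ≠ 0)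
    (U V : ℝ) (v : Fin 2 → ℝ) (hv0 : v 0 = σx * U) (hv1 : v 1 = σy * V) :
    v ⬝ᵥ (!![σx ^ 2, r * σx * σy; r * σx * σy, σy ^ 2])⁻¹.mulVec v =
      (U ^ 2 - 2 * r * U * V + V ^ 2) / (1 - r ^ 2) := by
  have hdet : (!![σx ^ 2, r * σx * σy; r * σx * σy, σy ^ 2]).det
      = σx ^ 2 * σy ^ 2 * (1 - r ^ 2) := by
    simp [Matrix.det_fin_two_of]; ring
  rw [Matrix.inv_def]
  simp only [Matrix.adjugate_fin_two_of, Ring.inverse_eq_inv, hdet,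
    Matrix.smul_apply, Matrix.mulVec, dotProduct, Fin.sum_univ_two, smul_eq_mul,
    Matrix.cons_val', Matrix.cons_val_zero, Matrix.cons_val_one, Matrix.head_cons,
    Matrix.empty_val', Matrix.cons_val_fin_one, Matrix.head_fin_const, hv0, hv1,
    Matrix.of_apply]
  field_simp
  ring

/-- The affine lower triangular (Knothe–Rosenblatt) map, whose first component is the
univariate Gaussian optimal map between first marginals and whose second component is the
conditional Gaussian transport, pushes the bivariate Gaussian `N₀` forward to `N₁`. -/
theorem stmt_16 (μ0x μ0y μ1x μ1y σ0x σ0y σ1x σ1y r0 r1 : ℝ)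
    (hσ0x : 0 < σ0x) (hσ0y : 0 < σ0y) (hσ1x : 0 < σ1x) (hσ1y : 0 < σ1y)
    (hr0 : r0 ∈ Set.Ioo (-1 : ℝ) 1) (hr1 : r1 ∈ Set.Ioo (-1 : ℝ) 1)
    (N0 N1 : Measure (Fin 2 → ℝ))
    (hN0 : N0 = mvGaussian ![μ0x, μ0y]
      !![σ0x ^ 2, r0 * σ0x * σ0y; r0 * σ0x * σ0y, σ0y ^ 2])
    (hN1 : N1 = mvGaussian ![μ1x, μ1y]
      !![σ1x ^ 2, r1 * σ1x * σ1y; r1 * σ1x * σ1y, σ1y ^ 2])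
    (Tx : ℝ → ℝ) (hTx : ∀ x, Tx x = μ1x + σ1x / σ0x * (x - μ0x))
    (Tyx : ℝ → ℝ → ℝ)
    (hTyx : ∀ x y, Tyx x y =
      μ1y + r1 * σ1y / σ1x * (Tx x - μ1x) +
        σ1y * Real.sqrt (1 - r1 ^ 2) / (σ0y * Real.sqrt (1 - r0 ^ 2)) *
          (y - μ0y - r0 * σ0y / σ0x * (x - μ0x))) :
    Measure.map (fun p : Fin 2 → ℝ => ![Tx (p 0), Tyx (p 0) (p 1)]) N0 = N1 := by
  obtain ⟨hr0l, hr0r⟩ := hr0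
  obtain ⟨hr1l, hr1r⟩ := hr1
  have h1r0 : (0:ℝ) < 1 - r0 ^ 2 := by nlinarith
  have h1r1 : (0:ℝ) < 1 - r1 ^ 2 := by nlinarith
  set s0 := Real.sqrt (1 - r0 ^ 2) with hs0
  set s1 := Real.sqrt (1 - r1 ^ 2) with hs1
  have hs0pos : 0 < s0 := Real.sqrt_pos.mpr h1r0
  have hs1pos : 0 < s1 := Real.sqrt_pos.mpr h1r1
  have hs0sq : s0 ^ 2 = 1 - r0 ^ 2 := Real.sq_sqrt h1r0.le
  have hs1sq : s1 ^ 2 = 1 - r1 ^ 2 := Real.sq_sqrt h1r1.le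
  set a := σ1x / σ0x with ha
  set k := σ1y * s1 / (σ0y * s0) with hk
  set c := (r1 * σ1y - k * r0 * σ0y) / σ0x with hc
  have hapos : 0 < a := by positivity
  have hkpos : 0 < k := by positivity
  have hak : 0 < a * k := by positivity
  set M : Matrix (Fin 2) (Fin 2) ℝ := !![a, 0; c, k] with hM
  have hMdet : M.det = a * k := by simp [hM, Matrix.det_fin_two_of]
  have hMunit : IsUnit M.det := by rw [hMdet]; exact isUnit_iff_ne_zero.mpr hak.ne'
  have hMinv : Invertible M := M.invertibleOfIsUnitDet hMunit
  set ℓ : (Fin 2 → ℝ) ≃ₗ[ℝ] (Fin 2 → ℝ) := M.toLinearEquiv' hMinv with hℓ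
  set b : Fin 2 → ℝ := ![μ1x - a * μ0x, μ1y - c * μ0x - k * μ0y] with hb
  set e : (Fin 2 → ℝ) ≃ᵐ (Fin 2 → ℝ) :=
    (ℓ.toContinuousLinearEquiv.toHomeomorph.trans (Homeomorph.addRight b)).toMeasurableEquiv
    with he
  have hecoe : ⇑e = fun p => Matrix.toLin' M p + b := by
    funext p
    simp [he, hℓ, Matrix.toLinearEquiv']
  have hfun : (fun p : Fin 2 → ℝ => ![Tx (p 0), Tyx (p 0) (p 1)]) = ⇑e := by
    funext p
    rw [hecoe]
    funext i
    fin_cases i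
    · simp [hTx, Matrix.toLin'_apply, Matrix.mulVec, dotProduct, Fin.sum_univ_two, hM, hb,
        ha, hk, hc]
      ring
    · simp [hTyx, hTx, Matrix.toLin'_apply, Matrix.mulVec, dotProduct, Fin.sum_univ_two, hM, hb,
        ha, hk, hc]
      field_simp
      ring
  have hmapvol : Measure.map e volume = ENNReal.ofReal ((a * k)⁻¹) • volume := by
    have hdet' : LinearMap.det (Matrix.toLin' M) ≠ 0 := by
      rw [LinearMap.det_toLin', hMdet]; exact hak.ne'
    rw [hecoe,
      show (fun p => Matrix.toLin' M p + b) = (fun x => x + b) ∘ (Matrix.toLin' M) from rfl,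
      ← Measure.map_map (measurable_add_const b)
        (Matrix.toLin' M).continuous_on_pi.measurable,
      Real.map_linearMap_volume_pi_eq_smul_volume_pi hdet',
      Measure.map_smul, map_add_right_eq_self, LinearMap.det_toLin', hMdet,
      abs_of_pos (by positivity)]
  -- constants
  have hC0 : Real.sqrt ((2 * Real.pi) ^ 2
      * (!![σ0x ^ 2, r0 * σ0x * σ0y; r0 * σ0x * σ0y, σ0y ^ 2]).det)⁻¹
      = (2 * Real.pi * (σ0x * σ0y * s0))⁻¹ := by
    have hdet0 : (!![σ0x ^ 2, r0 * σ0x * σ0y; r0 * σ0x * σ0y, σ0y ^ 2]).det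
        = (σ0x * σ0y * s0) ^ 2 := by
      simp [Matrix.det_fin_two_of]
      linear_combination (-(σ0x * σ0y) ^ 2) * hs0sq
    rw [hdet0, ← mul_pow, Real.sqrt_inv, Real.sqrt_sq (by positivity)]
  have hC1 : Real.sqrt ((2 * Real.pi) ^ 2
      * (!![σ1x ^ 2, r1 * σ1x * σ1y; r1 * σ1x * σ1y, σ1y ^ 2]).det)⁻¹
      = (2 * Real.pi * (σ1x * σ1y * s1))⁻¹ := by
    have hdet1 : (!![σ1x ^ 2, r1 * σ1x * σ1y; r1 * σ1x * σ1y, σ1y ^ 2]).det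
        = (σ1x * σ1y * s1) ^ 2 := by
      simp [Matrix.det_fin_two_of]
      linear_combination (-(σ1x * σ1y) ^ 2) * hs1sq
    rw [hdet1, ← mul_pow, Real.sqrt_inv, Real.sqrt_sq (by positivity)]
  rw [hN0, hN1, hfun]
  simp only [mvGaussian]
  have hdens : (fun x : Fin 2 → ℝ =>
      ENNReal.ofReal (Real.sqrt ((2 * Real.pi) ^ 2
          * (!![σ0x ^ 2, r0 * σ0x * σ0y; r0 * σ0x * σ0y, σ0y ^ 2]).det)⁻¹ *
        Real.exp (-(1 / 2) * ((x - ![μ0x, μ0y]) ⬝ᵥ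
          (!![σ0x ^ 2, r0 * σ0x * σ0y; r0 * σ0x * σ0y, σ0y ^ 2])⁻¹.mulVec (x - ![μ0x, μ0y])))))
      = fun x => (ENNReal.ofReal (a * k) • fun y : Fin 2 → ℝ =>
        ENNReal.ofReal (Real.sqrt ((2 * Real.pi) ^ 2
            * (!![σ1x ^ 2, r1 * σ1x * σ1y; r1 * σ1x * σ1y, σ1y ^ 2]).det)⁻¹ *
          Real.exp (-(1 / 2) * ((y - ![μ1x, μ1y]) ⬝ᵥ
            (!![σ1x ^ 2, r1 * σ1x * σ1y; r1 * σ1x * σ1y, σ1y ^ 2])⁻¹.mulVec (y - ![μ1x, μ1y])))))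
          (e x) := by
    funext p
    have hep : e p = ![Tx (p 0), Tyx (p 0) (p 1)] := (congrFun hfun p).symm
    set u := (p 0 - μ0x) / σ0x with hu
    set w := ((p 1 - μ0y) / σ0y - r0 * u) / s0 with hw
    have h00 : (p - ![μ0x, μ0y]) 0 = σ0x * u := by
      simp [hu]; field_simp [hσ0x.ne']
    have h01 : (p - ![μ0x, μ0y]) 1 = σ0y * (r0 * u + s0 * w) := by
      simp [hu, hw]; field_simp [hσ0x.ne', hσ0y.ne', hs0pos.ne']; ring
    have h10 : (e p - ![μ1x, μ1y]) 0 = σ1x * u := by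
      rw [hep]; simp [hTx, hu, ha, hk, hc]; field_simp [hσ0x.ne']
    have h11 : (e p - ![μ1x, μ1y]) 1 = σ1y * (r1 * u + s1 * w) := by
      rw [hep]; simp [hTyx, hTx, hu, hw, ha, hk, hc]
      field_simp [hσ0x.ne', hσ0y.ne', hσ1x.ne', hs0pos.ne']; ring
    simp only [Pi.smul_apply, smul_eq_mul]
    rw [qform_eval σ0x σ0y r0 hσ0x.ne' hσ0y.ne' h1r0.ne' u (r0 * u + s0 * w) _ h00 h01,
      qform_eval σ1x σ1y r1 hσ1x.ne' hσ1y.ne' h1r1.ne' u (r1 * u + s1 * w) _ h10 h11,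
      ← ENNReal.ofReal_mul hak.le]
    congr 1
    have hQ0' : (u ^ 2 - 2 * r0 * u * (r0 * u + s0 * w) + (r0 * u + s0 * w) ^ 2) / (1 - r0 ^ 2)
        = u ^ 2 + w ^ 2 := by
      rw [div_eq_iff h1r0.ne']
      linear_combination w ^ 2 * hs0sq
    have hQ1' : (u ^ 2 - 2 * r1 * u * (r1 * u + s1 * w) + (r1 * u + s1 * w) ^ 2) / (1 - r1 ^ 2)
        = u ^ 2 + w ^ 2 := by
      rw [div_eq_iff h1r1.ne']
      linear_combination w ^ 2 * hs1sq
    rw [hQ0', hQ1', hC0, hC1, ha, hk]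
    field_simp
  rw [hdens,
    map_withDensity_equiv e volume
      (ENNReal.ofReal (a * k) • fun y : Fin 2 → ℝ =>
        ENNReal.ofReal (Real.sqrt ((2 * Real.pi) ^ 2
            * (!![σ1x ^ 2, r1 * σ1x * σ1y; r1 * σ1x * σ1y, σ1y ^ 2]).det)⁻¹ *
          Real.exp (-(1 / 2) * ((y - ![μ1x, μ1y]) ⬝ᵥ
            (!![σ1x ^ 2, r1 * σ1x * σ1y; r1 * σ1x * σ1y, σ1y ^ 2])⁻¹.mulVec (y - ![μ1x, μ1y]))))),
    hmapvol, withDensity_smul_measure,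
    withDensity_smul' _ _ ENNReal.ofReal_ne_top, smul_smul,
    ← ENNReal.ofReal_mul (by positivity), inv_mul_cancel₀ hak.ne', ENNReal.ofReal_one, one_smul]
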